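/- Let D be a set with |D| = 3 and let m ≥ 1, and write A = (3^{m+1} − 1)/2. Then the number of m-endomorphisms on the free monoid D*, up to combinatorial equivalence, equals (1/6)·( A³ + 3(m+1)·A + 2·A ). -/

import Mathlib

open FreeMonoid MulAction Equiv

namespace MEndoAux

/-- m-endomorphisms of the free monoid on D, as a subtype. -/
abbrev Endo (D : Type*) (m : ℕ) :=
  {φ : FreeMonoid D →* FreeMonoid D // ∀ d : D, (φ (FreeMonoid.of d)).length ≤ m}

variable {α β γ : Type*} {m : ℕ}

lemma fm_ext {u v : FreeMonoid α} (h : u.toList = v.toList) : u = v := h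

lemma hom_eq_iff {M : Type*} [Monoid M] {f g : FreeMonoid α →* M} :
    f = g ↔ ∀ x, f (of x) = g (of x) :=
  ⟨fun h x => h ▸ rfl, fun h => hom_eq h⟩

lemma fm_length_map (f : α → β) (w : FreeMonoid α) :
    (FreeMonoid.map f w).length = w.length :=
  List.length_map _

lemma fm_map_map (f : α → β) (g : β → γ) (w : FreeMonoid α) :
    FreeMonoid.map g (FreeMonoid.map f w) = FreeMonoid.map (g ∘ f) w := by
  rw [map_comp]; rfl

lemma list_map_eq_self {f : α → α} {l : List α} :
    l.map f = l ↔ ∀ x ∈ l, f x = x := by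
  induction l with
  | nil => simp
  | cons x l ih => simp [ih]

/-- Endomorphisms of bounded length correspond to functions to bounded words. -/
def endoEquiv (D : Type*) (m : ℕ) :
    Endo D m ≃ (D → {w : FreeMonoid D // w.length ≤ m}) where
  toFun φ d := ⟨φ.1 (of d), φ.2 d⟩
  invFun f := ⟨FreeMonoid.lift (fun d => (f d).1), fun d => by
    simpa using (f d).2⟩
  left_inv φ := Subtype.ext (hom_eq fun d => by simp)
  right_inv f := funext fun d => Subtype.ext (by simp)

/-- Bounded-length words as a sigma type of vectors. -/
def wEquiv (D : Type*) (m : ℕ) :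
    {w : FreeMonoid D // w.length ≤ m} ≃ Σ i : Fin (m + 1), List.Vector D i where
  toFun w := ⟨⟨w.1.length, Nat.lt_succ_of_le w.2⟩, ⟨w.1.toList, rfl⟩⟩
  invFun v := ⟨FreeMonoid.ofList v.2.1, by
    have := v.2.2
    have h2 : (v.1 : ℕ) ≤ m := Nat.lt_succ_iff.mp v.1.2
    show (v.2.1).length ≤ m
    omega⟩
  left_inv w := Subtype.ext rfl
  right_inv v := by
    rcases v with ⟨⟨i, hi⟩, ⟨l, hl⟩⟩
    have : i = l.length := hl.symm
    subst this
    rfl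

end MEndoAux

namespace MEndoAux

variable {m : ℕ}

instance (D : Type*) [DecidableEq D] : DecidableEq (FreeMonoid D) :=
  (FreeMonoid.toList (α := D)).decidableEq

instance (D : Type*) [DecidableEq D] [Fintype D] (m : ℕ) :
    Fintype {w : FreeMonoid D // w.length ≤ m} :=
  Fintype.ofEquiv _ (wEquiv D m).symm

noncomputable instance (D : Type*) [DecidableEq D] [Fintype D] (m : ℕ) :
    Fintype (Endo D m) :=
  Fintype.ofEquiv _ (endoEquiv D m).symm

lemma card_w (D : Type*) [DecidableEq D] [Fintype D] (m : ℕ) :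
    Fintype.card {w : FreeMonoid D // w.length ≤ m}
      = ∑ i ∈ Finset.range (m + 1), Fintype.card D ^ i := by
  rw [Fintype.card_congr (wEquiv D m), Fintype.card_sigma]
  simp [card_vector, Fin.sum_univ_eq_sum_range]

end MEndoAux

namespace MEndoAux

variable {D : Type*} {m : ℕ}

instance : SMul (Equiv.Perm D) (Endo D m) :=
  ⟨fun g φ => ⟨((FreeMonoid.map ⇑g).comp φ.1).comp (FreeMonoid.map ⇑g⁻¹), fun d => by
    simp only [MonoidHom.comp_apply, map_of, fm_length_map]
    exact φ.2 _⟩⟩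

lemma smul_apply_of (g : Equiv.Perm D) (φ : Endo D m) (d : D) :
    (g • φ).1 (of d) = FreeMonoid.map ⇑g (φ.1 (of (g⁻¹ d))) := rfl

instance : MulAction (Equiv.Perm D) (Endo D m) where
  one_smul φ := Subtype.ext (hom_eq fun d => by
    simp [smul_apply_of, Equiv.Perm.coe_one, FreeMonoid.map_id])
  mul_smul g h φ := Subtype.ext (hom_eq fun d => by
    simp only [smul_apply_of, mul_inv_rev, Equiv.Perm.coe_mul, Function.comp_apply,
      fm_map_map])

lemma smul_eq_iff {g : Equiv.Perm D} {φ ψ : Endo D m} :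
    g • φ = ψ ↔ ψ.1.comp (FreeMonoid.map ⇑g) = (FreeMonoid.map ⇑g).comp φ.1 := by
  rw [Subtype.ext_iff, hom_eq_iff, hom_eq_iff]
  constructor
  · intro h d
    simp only [MonoidHom.comp_apply, map_of]
    rw [← h (g d)]
    simp [smul_apply_of]
  · intro h d
    simp only [MonoidHom.comp_apply, map_of] at h
    rw [smul_apply_of, ← h (g⁻¹ d)]
    simp

lemma mem_fixedBy_iff {g : Equiv.Perm D} {φ : Endo D m} :
    φ ∈ fixedBy (Endo D m) g ↔
      ∀ d, FreeMonoid.map ⇑g (φ.1 (of d)) = φ.1 (of (g d)) := by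
  rw [MulAction.mem_fixedBy, smul_eq_iff, hom_eq_iff]
  simp [eq_comm]

end MEndoAux

namespace MEndoAux

variable {m : ℕ}

noncomputable instance (D : Type*) [DecidableEq D] [Fintype D] (m : ℕ)
    (g : Equiv.Perm D) : Fintype (fixedBy (Endo D m) g) :=
  Set.Finite.fintype (Set.toFinite _)

lemma card_fixed_one (D : Type*) [DecidableEq D] [Fintype D] (m : ℕ) :
    Fintype.card (fixedBy (Endo D m) (1 : Equiv.Perm D))
      = Fintype.card {w : FreeMonoid D // w.length ≤ m} ^ Fintype.card D := by
  have h1 : fixedBy (Endo D m) (1 : Equiv.Perm D) = Set.univ :=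
    fixedBy_one_eq_univ (Endo D m) (Equiv.Perm D)
  rw [Fintype.card_congr ((Equiv.setCongr h1).trans (Equiv.Set.univ _))]
  rw [Fintype.card_congr (endoEquiv D m)]
  rw [Fintype.card_fun]

end MEndoAux

namespace MEndoAux

section Swap

variable {D : Type*} [DecidableEq D] [Fintype D] {m : ℕ}

lemma map_swap_swap (a b : D) (w : FreeMonoid D) :
    FreeMonoid.map ⇑(Equiv.swap a b) (FreeMonoid.map ⇑(Equiv.swap a b) w) = w := by
  rw [fm_map_map]
  have h : ⇑(Equiv.swap a b) ∘ ⇑(Equiv.swap a b) = id :=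
    funext fun x => Equiv.swap_apply_self a b x
  rw [h, FreeMonoid.map_id, MonoidHom.id_apply]

/-- reconstruction function for the swap case -/
def swapFun (a b : D) (u v : FreeMonoid D) : D → FreeMonoid D := fun d =>
  if d = a then u else if d = b then FreeMonoid.map ⇑(Equiv.swap a b) u else v

variable (a b t : D) (hba : b ≠ a) (hta : t ≠ a) (htb : t ≠ b)
  (hcov : ∀ d : D, d = a ∨ d = b ∨ d = t)

def swapEquiv :
    fixedBy (Endo D m) (Equiv.swap a b) ≃
      {w : FreeMonoid D // w.length ≤ m} ×
        {w : {w : FreeMonoid D // w.length ≤ m} //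
          FreeMonoid.map ⇑(Equiv.swap a b) w.1 = w.1} where
  toFun φ :=
    (⟨φ.1.1 (of a), φ.1.2 a⟩,
      ⟨⟨φ.1.1 (of t), φ.1.2 t⟩, by
        have h := mem_fixedBy_iff.mp φ.2 t
        rwa [Equiv.swap_apply_of_ne_of_ne hta htb] at h⟩)
  invFun uv :=
    ⟨⟨FreeMonoid.lift (swapFun a b uv.1.1 uv.2.1.1), by
        intro d
        rw [FreeMonoid.lift_eval_of]
        unfold swapFun
        split_ifs
        · exact uv.1.2
        · rw [fm_length_map]; exact uv.1.2
        · exact uv.2.1.2⟩, by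
      refine mem_fixedBy_iff.mpr fun d => ?_
      rcases hcov d with rfl | rfl | rfl
      · simp [swapFun, Equiv.swap_apply_left, hba]
      · simp [swapFun, Equiv.swap_apply_right, hba, map_swap_swap]
      · simp [swapFun, Equiv.swap_apply_of_ne_of_ne hta htb, hta, htb, uv.2.2]⟩
  left_inv φ := Subtype.ext (Subtype.ext (hom_eq fun d => by
    rcases hcov d with rfl | rfl | rfl
    · simp [swapFun]
    · have h := mem_fixedBy_iff.mp φ.2 a
      rw [Equiv.swap_apply_left] at h
      simp [swapFun, hba, h]
    · simp [swapFun, hta, htb]))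
  right_inv uv := Prod.ext (Subtype.ext (by simp [swapFun]))
    (Subtype.ext (Subtype.ext (by simp [swapFun, hta, htb])))

def fixWordEquiv :
    {w : {w : FreeMonoid D // w.length ≤ m} //
        FreeMonoid.map ⇑(Equiv.swap a b) w.1 = w.1} ≃ Fin (m + 1) where
  toFun w := ⟨w.1.1.length, Nat.lt_succ_of_le w.1.2⟩
  invFun n :=
    ⟨⟨FreeMonoid.ofList (List.replicate (n : ℕ) t), by
        show (List.replicate (n : ℕ) t).length ≤ m
        rw [List.length_replicate]
        exact Nat.lt_succ_iff.mp n.2⟩, by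
      apply fm_ext
      rw [toList_map]
      show (List.replicate (n : ℕ) t).map _ = _
      rw [List.map_replicate, Equiv.swap_apply_of_ne_of_ne hta htb]
      rfl⟩
  left_inv w := by
    refine Subtype.ext (Subtype.ext (fm_ext ?_))
    have hmap : (w.1.1.toList).map ⇑(Equiv.swap a b) = w.1.1.toList := by
      have := congrArg FreeMonoid.toList w.2
      rwa [toList_map] at this
    have hall : ∀ x ∈ w.1.1.toList, x = t := by
      intro x hx
      have hs := list_map_eq_self.mp hmap x hx
      rcases hcov x with rfl | rfl | rfl
      · rw [Equiv.swap_apply_left] at hs; exact absurd hs hba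
      · rw [Equiv.swap_apply_right] at hs; exact absurd hs.symm hba
      · rfl
    show List.replicate w.1.1.length t = w.1.1.toList
    exact (List.eq_replicate_length.mpr hall).symm
  right_inv n := by
    apply Fin.ext
    show (List.replicate (n : ℕ) t).length = n
    rw [List.length_replicate]

lemma card_fixed_swap (hba : b ≠ a) (hta : t ≠ a) (htb : t ≠ b)
    (hcov : ∀ d : D, d = a ∨ d = b ∨ d = t) :
    Fintype.card (fixedBy (Endo D m) (Equiv.swap a b))
      = Fintype.card {w : FreeMonoid D // w.length ≤ m} * (m + 1) := by
  rw [Fintype.card_congr (swapEquiv a b t hba hta htb hcov), Fintype.card_prod,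
    Fintype.card_congr (fixWordEquiv a b t hba hta htb hcov), Fintype.card_fin]

end Swap

end MEndoAux

namespace MEndoAux

section Cycle

variable {D : Type*} [DecidableEq D] [Fintype D] {m : ℕ}

def cycFun (c : Equiv.Perm D) (a b : D) (u : FreeMonoid D) : D → FreeMonoid D := fun d =>
  if d = a then u else if d = b then FreeMonoid.map ⇑c u
  else FreeMonoid.map ⇑c (FreeMonoid.map ⇑c u)

variable (c : Equiv.Perm D) (a b t : D)

lemma map_c_cube (hca : c a = b) (hcb : c b = t) (hct : c t = a)
    (hcov : ∀ d : D, d = a ∨ d = b ∨ d = t) (w : FreeMonoid D) :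
    FreeMonoid.map ⇑c (FreeMonoid.map ⇑c (FreeMonoid.map ⇑c w)) = w := by
  rw [fm_map_map, fm_map_map]
  have h : (⇑c ∘ ⇑c) ∘ ⇑c = id := funext fun x => by
    rcases hcov x with rfl | rfl | rfl <;>
      simp [Function.comp, hca, hcb, hct]
  rw [h, FreeMonoid.map_id, MonoidHom.id_apply]

def cycEquiv (hca : c a = b) (hcb : c b = t) (hct : c t = a)
    (hba : b ≠ a) (hta : t ≠ a) (htb : t ≠ b)
    (hcov : ∀ d : D, d = a ∨ d = b ∨ d = t) :
    fixedBy (Endo D m) c ≃ {w : FreeMonoid D // w.length ≤ m} where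
  toFun φ := ⟨φ.1.1 (of a), φ.1.2 a⟩
  invFun u :=
    ⟨⟨FreeMonoid.lift (cycFun c a b u.1), by
        intro d
        rw [FreeMonoid.lift_eval_of]
        unfold cycFun
        split_ifs
        · exact u.2
        · rw [fm_length_map]; exact u.2
        · rw [fm_length_map, fm_length_map]; exact u.2⟩, by
      refine mem_fixedBy_iff.mpr fun d => ?_
      rcases hcov d with rfl | rfl | rfl
      · simp [cycFun, hca, hba]
      · simp [cycFun, hcb, hta, htb, hba]
      · simp [cycFun, hct, hta, htb, map_c_cube c a b _ hca hcb hct hcov]⟩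
  left_inv φ := Subtype.ext (Subtype.ext (hom_eq fun d => by
    have ha := mem_fixedBy_iff.mp φ.2 a
    rw [hca] at ha
    have hb := mem_fixedBy_iff.mp φ.2 b
    rw [hcb] at hb
    rcases hcov d with rfl | rfl | rfl
    · simp [cycFun]
    · simp [cycFun, hba, ha]
    · simp [cycFun, hta, htb, ha, hb]))
  right_inv u := Subtype.ext (by simp [cycFun])

lemma card_fixed_cycle (hca : c a = b) (hcb : c b = t) (hct : c t = a)
    (hba : b ≠ a) (hta : t ≠ a) (htb : t ≠ b)
    (hcov : ∀ d : D, d = a ∨ d = b ∨ d = t) :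
    Fintype.card (fixedBy (Endo D m) c)
      = Fintype.card {w : FreeMonoid D // w.length ≤ m} :=
  Fintype.card_congr (cycEquiv c a b t hca hcb hct hba hta htb hcov)

end Cycle

end MEndoAux

namespace MEndoAux

variable {m : ℕ}

noncomputable instance (m : ℕ) :
    Fintype (Quotient (orbitRel (Equiv.Perm (Fin 3)) (Endo (Fin 3) m))) :=
  @Quotient.fintype _ _ _ (fun _ _ => Classical.dec _)

lemma sum_fixed (m : ℕ) :
    (∑ g : Equiv.Perm (Fin 3), Fintype.card (fixedBy (Endo (Fin 3) m) g))
      = Fintype.card {w : FreeMonoid (Fin 3) // w.length ≤ m} ^ 3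
        + 3 * (Fintype.card {w : FreeMonoid (Fin 3) // w.length ≤ m} * (m + 1))
        + 2 * Fintype.card {w : FreeMonoid (Fin 3) // w.length ≤ m} := by
  classical
  have huniv : (Finset.univ : Finset (Equiv.Perm (Fin 3)))
      = {1, Equiv.swap 0 1, Equiv.swap 0 2, Equiv.swap 1 2,
          Equiv.swap 0 1 * Equiv.swap 1 2, Equiv.swap 1 2 * Equiv.swap 0 1} := by
    decide
  rw [huniv]
  rw [show ({1, Equiv.swap 0 1, Equiv.swap 0 2, Equiv.swap 1 2,
      Equiv.swap 0 1 * Equiv.swap 1 2, Equiv.swap 1 2 * Equiv.swap 0 1} :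
        Finset (Equiv.Perm (Fin 3)))
    = insert 1 (insert (Equiv.swap 0 1) (insert (Equiv.swap 0 2) (insert (Equiv.swap 1 2)
        (insert (Equiv.swap 0 1 * Equiv.swap 1 2)
          ({Equiv.swap 1 2 * Equiv.swap 0 1} : Finset (Equiv.Perm (Fin 3))))))) from rfl]
  rw [Finset.sum_insert (by decide), Finset.sum_insert (by decide),
    Finset.sum_insert (by decide), Finset.sum_insert (by decide),
    Finset.sum_insert (by decide), Finset.sum_singleton]
  rw [card_fixed_one (Fin 3) m]
  rw [card_fixed_swap 0 1 2 (by decide) (by decide) (by decide) (by decide)]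
  rw [card_fixed_swap 0 2 1 (by decide) (by decide) (by decide) (by decide)]
  rw [card_fixed_swap 1 2 0 (by decide) (by decide) (by decide) (by decide)]
  rw [card_fixed_cycle (Equiv.swap 0 1 * Equiv.swap 1 2) 0 1 2 (by decide) (by decide)
    (by decide) (by decide) (by decide) (by decide) (by decide)]
  rw [card_fixed_cycle (Equiv.swap 1 2 * Equiv.swap 0 1) 0 2 1 (by decide) (by decide)
    (by decide) (by decide) (by decide) (by decide) (by decide)]
  rw [show Fintype.card (Fin 3) = 3 from rfl]
  ring

lemma burnside (m : ℕ) :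
    Fintype.card {w : FreeMonoid (Fin 3) // w.length ≤ m} ^ 3
        + 3 * (Fintype.card {w : FreeMonoid (Fin 3) // w.length ≤ m} * (m + 1))
        + 2 * Fintype.card {w : FreeMonoid (Fin 3) // w.length ≤ m}
      = Fintype.card (Quotient (orbitRel (Equiv.Perm (Fin 3)) (Endo (Fin 3) m))) * 6 := by
  rw [← sum_fixed m]
  have h := MulAction.sum_card_fixedBy_eq_card_orbits_mul_card_group
    (Equiv.Perm (Fin 3)) (Endo (Fin 3) m)
  rw [h]
  congr 1

end MEndoAux

namespace MEndoAux

variable {m : ℕ} {C E : Type*}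

def transMap (e : C ≃ E) (φ : Endo C m) : Endo E m :=
  ⟨((FreeMonoid.map ⇑e).comp φ.1).comp (FreeMonoid.map ⇑e.symm), fun d => by
    simp only [MonoidHom.comp_apply, map_of, fm_length_map]
    exact φ.2 _⟩

lemma transMap_apply_of (e : C ≃ E) (φ : Endo C m) (d : E) :
    (transMap e φ).1 (of d) = FreeMonoid.map ⇑e (φ.1 (of (e.symm d))) := rfl

lemma map_symm_map (e : C ≃ E) (w : FreeMonoid C) :
    FreeMonoid.map ⇑e.symm (FreeMonoid.map ⇑e w) = w := by
  rw [fm_map_map]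
  have h : ⇑e.symm ∘ ⇑e = id := funext e.symm_apply_apply
  rw [h, FreeMonoid.map_id, MonoidHom.id_apply]

lemma transMap_symm_transMap (e : C ≃ E) (φ : Endo C m) :
    transMap e.symm (transMap e φ) = φ :=
  Subtype.ext (hom_eq fun d => by
    rw [transMap_apply_of, transMap_apply_of, Equiv.symm_symm, Equiv.symm_apply_apply,
      map_symm_map])

def transEquiv (e : C ≃ E) : Endo C m ≃ Endo E m where
  toFun := transMap e
  invFun := transMap e.symm
  left_inv := transMap_symm_transMap e
  right_inv φ := by
    have h := transMap_symm_transMap e.symm φ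
    rwa [Equiv.symm_symm] at h

lemma rel_map (e : C ≃ E) (φ ψ : Endo C m) (g : Equiv.Perm C)
    (h : ψ.1.comp (FreeMonoid.map ⇑g) = (FreeMonoid.map ⇑g).comp φ.1) :
    ∃ g' : Equiv.Perm E,
      (transMap e ψ).1.comp (FreeMonoid.map ⇑g')
        = (FreeMonoid.map ⇑g').comp (transMap e φ).1 := by
  refine ⟨e.permCongr g, hom_eq fun d => ?_⟩
  have h' := hom_eq_iff.mp h
  simp only [MonoidHom.comp_apply, map_of] at h' ⊢
  rw [transMap_apply_of, transMap_apply_of]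
  have hd : e.symm ((e.permCongr g) d) = g (e.symm d) := by
    simp [Equiv.permCongr_apply]
  rw [hd, h' (e.symm d), fm_map_map, fm_map_map]
  have hfun : ⇑(e.permCongr g) ∘ ⇑e = ⇑e ∘ ⇑g := funext fun x => by
    simp [Equiv.permCongr_apply]
  rw [hfun]

lemma rel_iff (e : C ≃ E) (φ ψ : Endo C m) :
    (∃ g : Equiv.Perm C,
        ψ.1.comp (FreeMonoid.map ⇑g) = (FreeMonoid.map ⇑g).comp φ.1)
      ↔ (∃ g' : Equiv.Perm E,
        (transMap e ψ).1.comp (FreeMonoid.map ⇑g')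
          = (FreeMonoid.map ⇑g').comp (transMap e φ).1) := by
  constructor
  · rintro ⟨g, h⟩
    exact rel_map e φ ψ g h
  · rintro ⟨g', h⟩
    have h2 := rel_map e.symm _ _ g' h
    rwa [transMap_symm_transMap, transMap_symm_transMap] at h2

lemma rel_iff_orbit {D : Type*} (φ ψ : Endo D m) :
    (∃ g : Equiv.Perm D,
        ψ.1.comp (FreeMonoid.map ⇑g) = (FreeMonoid.map ⇑g).comp φ.1)
      ↔ orbitRel (Equiv.Perm D) (Endo D m) φ ψ := by
  rw [orbitRel_apply, MulAction.mem_orbit_iff]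
  constructor
  · rintro ⟨g, h⟩
    refine ⟨g⁻¹, ?_⟩
    have : g • φ = ψ := smul_eq_iff.mpr h
    rw [← this, inv_smul_smul]
  · rintro ⟨g, h⟩
    refine ⟨g⁻¹, smul_eq_iff.mp ?_⟩
    rw [← h, inv_smul_smul]

end MEndoAux

open MEndoAux in
/-- If `|D| = 3` and `m ≥ 1`, then with `A = (3^{m+1} − 1)/2`, the number of
`m`-endomorphisms on the free monoid `D*`, up to combinatorial equivalence, is
`(1/6)·(A³ + 3(m+1)·A + 2·A)`. -/
theorem number_of_classes_of_m_endomorphisms_free_monoid_card_three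
    {D : Type*} [Fintype D] {m : ℕ} (hm : 1 ≤ m) (hcard : Fintype.card D = 3) :
    (Nat.card (Quot (fun φ ψ : {φ : FreeMonoid D →* FreeMonoid D //
          ∀ d : D, (φ (FreeMonoid.of d)).length ≤ m} =>
        ∃ g : Equiv.Perm D,
          (ψ : FreeMonoid D →* FreeMonoid D).comp (FreeMonoid.map ⇑g)
            = (FreeMonoid.map ⇑g).comp (φ : FreeMonoid D →* FreeMonoid D))) : ℚ)
      = (1 / 6) * ((((3 : ℚ) ^ (m + 1) - 1) / 2) ^ 3
          + 3 * (m + 1) * (((3 : ℚ) ^ (m + 1) - 1) / 2)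
          + 2 * (((3 : ℚ) ^ (m + 1) - 1) / 2)) := by
  classical
  have e : D ≃ Fin 3 := Fintype.equivFinOfCardEq hcard
  have E1 : Quot (fun φ ψ : {φ : FreeMonoid D →* FreeMonoid D //
          ∀ d : D, (φ (FreeMonoid.of d)).length ≤ m} =>
        ∃ g : Equiv.Perm D,
          (ψ : FreeMonoid D →* FreeMonoid D).comp (FreeMonoid.map ⇑g)
            = (FreeMonoid.map ⇑g).comp (φ : FreeMonoid D →* FreeMonoid D))
      ≃ Quotient (orbitRel (Equiv.Perm (Fin 3)) (Endo (Fin 3) m)) :=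
    Quot.congr (transEquiv e)
      (fun φ ψ => (rel_iff e φ ψ).trans (rel_iff_orbit _ _))
  have hN := (Nat.card_congr E1).trans Nat.card_eq_fintype_card
  rw [hN]
  have hb := burnside m
  have hA : Fintype.card {w : FreeMonoid (Fin 3) // w.length ≤ m}
      = ∑ i ∈ Finset.range (m + 1), 3 ^ i := by
    rw [card_w]
    norm_num
  have hAq : ((Fintype.card {w : FreeMonoid (Fin 3) // w.length ≤ m} : ℕ) : ℚ)
      = ((3 : ℚ) ^ (m + 1) - 1) / 2 := by
    rw [hA]
    push_cast
    rw [geom_sum_eq (by norm_num : (3 : ℚ) ≠ 1) (m + 1)]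
    norm_num
  have h6 : ((Fintype.card {w : FreeMonoid (Fin 3) // w.length ≤ m} : ℕ) : ℚ) ^ 3
        + 3 * (((Fintype.card {w : FreeMonoid (Fin 3) // w.length ≤ m} : ℕ) : ℚ)
          * ((m : ℚ) + 1))
        + 2 * ((Fintype.card {w : FreeMonoid (Fin 3) // w.length ≤ m} : ℕ) : ℚ)
      = ((Fintype.card
          (Quotient (orbitRel (Equiv.Perm (Fin 3)) (Endo (Fin 3) m))) : ℕ) : ℚ) * 6 := by
    exact_mod_cast congrArg (Nat.cast (R := ℚ)) hb
  rw [← hAq]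
  push_cast at h6 ⊢
  linear_combination -h6 / 6
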